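/- (Strongly convex per-iteration contraction.) Let ι be a finite nonempty index type with a distinguished element i₀, and let ŵ : ι → ℝ satisfy ŵ_j ≥ 0 for all j and Σ_j ŵ_j = 1. Let γ > 0 and β ≥ 0 with γ·β ≤ ŵ_{i₀}. Let f, h, m : ℝ^d → ℝ with m and h convex, set φ := f + h, fix x̄ ∈ ℝ^d, and assume m(y) ≤ f(y) ≤ m(y) + (β/2)‖y − x̄‖² for all y. Assume moreover that φ is θ-strongly convex with θ > 0. Let z : ι → ℝ^d with z_{i₀} = x̄, and let x* : ι → ℝ^d. Suppose x⁺, g⁺ ∈ ℝ^d satisfy: g⁺ is a subgradient of m + h at x⁺ and x⁺ = Σ_j ŵ_j z_j − γ g⁺. Suppose g* ∈ ℝ^d is a subgradient of φ at x*_{i₀} and x*_{i₀} = Σ_j ŵ_j x*_j − γ g*. Then ‖x⁺ − x*_{i₀}‖² ≤ (1/(1 + γθ)) · Σ_j ŵ_j ‖z_j − x*_j‖². -/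

import Mathlib

open scoped RealInnerProductSpace

section aux

variable {E : Type*} [NormedAddCommGroup E] [InnerProductSpace ℝ E]

lemma combo_norm_sq (x y : E) (t : ℝ) :
    ‖(1 - t) • x + t • y‖ ^ 2
      = (1 - t) * ‖x‖ ^ 2 + t * ‖y‖ ^ 2 - t * (1 - t) * ‖y - x‖ ^ 2 := by
  simp only [← real_inner_self_eq_norm_sq]
  simp only [inner_add_left, inner_add_right, inner_sub_left, inner_sub_right,
    real_inner_smul_left, real_inner_smul_right, real_inner_comm y x]
  ring

lemma strong_subgrad (θ : ℝ) (hθ : 0 ≤ θ) (φ : E → ℝ)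
    (hsc : ConvexOn ℝ Set.univ (fun x => φ x - θ / 2 * ‖x‖ ^ 2))
    (x g : E) (hg : ∀ y, φ y ≥ φ x + ⟪g, y - x⟫) (y : E) :
    φ y ≥ φ x + ⟪g, y - x⟫ + θ / 2 * ‖y - x‖ ^ 2 := by
  have key : ∀ t : ℝ, 0 < t → t < 1 →
      ⟪g, y - x⟫ + θ / 2 * (1 - t) * ‖y - x‖ ^ 2 ≤ φ y - φ x := by
    intro t ht ht1
    have hxt := hg ((1 - t) • x + t • y)
    have hc := hsc.2 (Set.mem_univ x) (Set.mem_univ y)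
      (by linarith : (0:ℝ) ≤ 1 - t) ht.le (by ring)
    simp only [smul_eq_mul] at hc
    have hnorm := combo_norm_sq x y t
    have hin : ⟪g, ((1 - t) • x + t • y) - x⟫ = t * ⟪g, y - x⟫ := by
      have harg : ((1 - t) • x + t • y) - x = t • (y - x) := by
        rw [smul_sub]; module
      rw [harg, real_inner_smul_right]
    rw [hin] at hxt
    rw [hnorm] at hc
    have h2 : t * (⟪g, y - x⟫ + θ / 2 * (1 - t) * ‖y - x‖ ^ 2) ≤ t * (φ y - φ x) := by
      nlinarith [hxt, hc]
    exact (mul_le_mul_iff_right₀ ht).mp h2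
  have c0 : 0 ≤ θ / 2 * ‖y - x‖ ^ 2 := by positivity
  have main : ⟪g, y - x⟫ + θ / 2 * ‖y - x‖ ^ 2 ≤ φ y - φ x := by
    apply le_of_forall_pos_le_add
    intro ε hε
    set C := θ / 2 * ‖y - x‖ ^ 2 with hC
    set t := min (1/2 : ℝ) (ε / (C + 1)) with htdef
    have hCpos : 0 < C + 1 := by linarith
    have ht0 : 0 < t := lt_min (by norm_num) (div_pos hε hCpos)
    have ht1 : t < 1 := lt_of_le_of_lt (min_le_left _ _) (by norm_num)
    have hkey := key t ht0 ht1
    have htle : t ≤ ε / (C + 1) := min_le_right _ _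
    have htC : t * (C + 1) ≤ ε := by
      rw [← le_div_iff₀ hCpos]; exact htle
    have : t * C ≤ ε := by nlinarith [ht0.le]
    nlinarith [hkey]
  linarith [main]

end aux

set_option maxHeartbeats 1000000 in
/-- Strongly convex per-iteration contraction of asynchronous DPBM. -/
theorem stmt_5 {d : ℕ} (hd : 1 ≤ d)
    {ι : Type*} [Fintype ι] [Nonempty ι] (i₀ : ι)
    (w : ι → ℝ) (hw : ∀ j, 0 ≤ w j) (hw1 : ∑ j, w j = 1)
    (γ β : ℝ) (hγ : 0 < γ) (hβ : 0 ≤ β) (hγβ : γ * β ≤ w i₀)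
    (f h m : EuclideanSpace ℝ (Fin d) → ℝ)
    (hmconv : ConvexOn ℝ Set.univ m) (hhconv : ConvexOn ℝ Set.univ h)
    (φ : EuclideanSpace ℝ (Fin d) → ℝ) (hφ : ∀ y, φ y = f y + h y)
    (xb : EuclideanSpace ℝ (Fin d))
    (hsand₁ : ∀ y, m y ≤ f y)
    (hsand₂ : ∀ y, f y ≤ m y + β / 2 * ‖y - xb‖ ^ 2)
    (θ : ℝ) (hθ : 0 < θ)
    (hsc : ConvexOn ℝ Set.univ (fun x => φ x - θ / 2 * ‖x‖ ^ 2))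
    (z : ι → EuclideanSpace ℝ (Fin d)) (hz : z i₀ = xb)
    (xstar : ι → EuclideanSpace ℝ (Fin d))
    (xp gp : EuclideanSpace ℝ (Fin d))
    (hgp : ∀ y, m y + h y ≥ m xp + h xp + ⟪gp, y - xp⟫)
    (hxp : xp = ∑ j, w j • z j - γ • gp)
    (gs : EuclideanSpace ℝ (Fin d))
    (hgs : ∀ y, φ y ≥ φ (xstar i₀) + ⟪gs, y - xstar i₀⟫)
    (hxs : xstar i₀ = ∑ j, w j • xstar j - γ • gs) :
    ‖xp - xstar i₀‖ ^ 2 ≤ (1 / (1 + γ * θ)) * ∑ j, w j * ‖z j - xstar j‖ ^ 2 := by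
  -- vector identity
  classical
  have hsv : (∑ j, w j • (z j - xstar j))
      = (∑ j, w j • z j) - (∑ j, w j • xstar j) := by
    rw [← Finset.sum_sub_distrib]
    simp only [smul_sub]
  have hsum_vec : xp - xstar i₀ = (∑ j, w j • (z j - xstar j)) - γ • (gp - gs) := by
    rw [hxp, hxs, hsv, smul_sub]
    abel
  -- strengthened subgradient inequality
  have strong := strong_subgrad θ hθ.le φ hsc (xstar i₀) gs hgs xp
  -- monotonicity-type inequality
  have hmono : ⟪xp - xstar i₀, gp - gs⟫
      ≥ θ / 2 * ‖xp - xstar i₀‖ ^ 2 - β / 2 * ‖xp - xb‖ ^ 2 := by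
    have A := hgp (xstar i₀)
    have e1 : ⟪gp, xstar i₀ - xp⟫ = -⟪gp, xp - xstar i₀⟫ := by
      rw [← inner_neg_right, neg_sub]
    rw [e1] at A
    have e2 : ⟪xp - xstar i₀, gp - gs⟫
        = ⟪gp, xp - xstar i₀⟫ - ⟪gs, xp - xstar i₀⟫ := by
      rw [real_inner_comm, inner_sub_left]
    rw [e2]
    have h1 := hsand₁ (xstar i₀)
    have h2 := hsand₂ xp
    have hφ1 := hφ (xstar i₀)
    have hφ2 := hφ xp
    linarith [strong]
  -- expand the squared norm
  have expand : ‖xp - xstar i₀‖ ^ 2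
      = (∑ j, w j * ⟪xp - xstar i₀, z j - xstar j⟫)
        - γ * ⟪xp - xstar i₀, gp - gs⟫ := by
    have e0 : ‖xp - xstar i₀‖ ^ 2 = ⟪xp - xstar i₀, xp - xstar i₀⟫ :=
      (real_inner_self_eq_norm_sq _).symm
    rw [e0]
    nth_rewrite 2 [hsum_vec]
    rw [inner_sub_right, inner_sum]
    simp only [real_inner_smul_right]
  -- generic per-term Young bound
  have bound : ∀ j, w j * ⟪xp - xstar i₀, z j - xstar j⟫
      ≤ w j * (‖xp - xstar i₀‖ ^ 2 + ‖z j - xstar j‖ ^ 2) / 2 := by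
    intro j
    have h1 : ⟪xp - xstar i₀, z j - xstar j⟫ ≤ ‖xp - xstar i₀‖ * ‖z j - xstar j‖ :=
      real_inner_le_norm _ _
    have h2 : ‖xp - xstar i₀‖ * ‖z j - xstar j‖
        ≤ (‖xp - xstar i₀‖ ^ 2 + ‖z j - xstar j‖ ^ 2) / 2 := by
      nlinarith [sq_nonneg (‖xp - xstar i₀‖ - ‖z j - xstar j‖)]
    nlinarith [hw j, h1.trans h2]
  -- special bound for the i₀ term, absorbing the β error
  have boundi : w i₀ * ⟪xp - xstar i₀, z i₀ - xstar i₀⟫ + γ * (β / 2 * ‖xp - xb‖ ^ 2)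
      ≤ w i₀ * (‖xp - xstar i₀‖ ^ 2 + ‖z i₀ - xstar i₀‖ ^ 2) / 2 := by
    have hz' : z i₀ - xstar i₀ = (xp - xstar i₀) + (xb - xp) := by
      rw [hz]; abel
    rw [hz', inner_add_right, norm_add_sq_real]
    have hq : ‖xp - xb‖ = ‖xb - xp‖ := norm_sub_rev _ _
    rw [hq]
    rw [real_inner_self_eq_norm_sq]
    nlinarith [mul_nonneg (sub_nonneg.mpr hγβ) (sq_nonneg ‖xb - xp‖)]
  -- split off the i₀ term of the sum
  have sum_split : (∑ j, w j * ⟪xp - xstar i₀, z j - xstar j⟫)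
        + γ * (β / 2 * ‖xp - xb‖ ^ 2)
      ≤ ∑ j, w j * (‖xp - xstar i₀‖ ^ 2 + ‖z j - xstar j‖ ^ 2) / 2 := by
    rw [← Finset.sum_erase_add Finset.univ
      (fun j => w j * ⟪xp - xstar i₀, z j - xstar j⟫) (Finset.mem_univ i₀),
      ← Finset.sum_erase_add Finset.univ
      (fun j => w j * (‖xp - xstar i₀‖ ^ 2 + ‖z j - xstar j‖ ^ 2) / 2)
      (Finset.mem_univ i₀)]
    have hs : ∑ j ∈ Finset.univ.erase i₀, w j * ⟪xp - xstar i₀, z j - xstar j⟫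
        ≤ ∑ j ∈ Finset.univ.erase i₀,
            w j * (‖xp - xstar i₀‖ ^ 2 + ‖z j - xstar j‖ ^ 2) / 2 :=
      Finset.sum_le_sum (fun j _ => bound j)
    linarith [boundi, hs]
  -- evaluate the right-hand sum
  have sum_eq : ∑ j, w j * (‖xp - xstar i₀‖ ^ 2 + ‖z j - xstar j‖ ^ 2) / 2
      = ‖xp - xstar i₀‖ ^ 2 / 2 + (∑ j, w j * ‖z j - xstar j‖ ^ 2) / 2 := by
    simp only [mul_add, add_div, Finset.sum_add_distrib]
    rw [← Finset.sum_div, ← Finset.sum_div, ← Finset.sum_mul, hw1]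
    ring
  -- put everything together
  have hpos : 0 < 1 + γ * θ := by positivity
  rw [one_div_mul_eq_div, le_div_iff₀ hpos]
  have hscale := mul_le_mul_of_nonneg_left hmono hγ.le
  nlinarith [expand, sum_split, sum_eq, hscale]
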